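/- arXiv:2601.02746 — 6 statements merged into one kernel-verified Lean document; each statement's English description precedes it below -/
import Mathlib

section
/- Let G be a finite simple graph whose adjacency matrix A_G has nullity one, and let x be a nonzero vector with A_G x = 0. If there exists a nonempty subset S ⊆ V(G) with Σ_{v∈S} x_v = 0 such that |S| is not equal to the degree of any vertex of G, then G satisfies the ACK property. -/
/-- A graph `G` satisfies the ACK property if there is a nonzero `{0,1}`-vector in the row
space of its adjacency matrix `A_G` (over `ℝ`) that is not equal to any row of `A_G`. -/
def AckProp {V : Type} [Fintype V] (G : SimpleGraph V) [DecidableRel G.Adj] : Prop :=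
  ∃ y : V → ℝ, y ≠ 0 ∧ (∀ v, y v = 0 ∨ y v = 1) ∧
    y ∈ Submodule.span ℝ (Set.range fun i => (G.adjMatrix ℝ) i) ∧
    ∀ i, y ≠ (G.adjMatrix ℝ) i

/-- If `G` has nullity one, `x` is a nonzero kernel vector, and `S` is a nonempty zero-sum
subset relative to `x` whose size differs from every vertex degree, then `G` satisfies
the ACK property. -/
theorem ackProp_of_zero_sum_subset_card_ne_degree {V : Type} [Fintype V] [DecidableEq V]
    (G : SimpleGraph V) [DecidableRel G.Adj]
    (hnull : Module.finrank ℝ ↥(LinearMap.ker (G.adjMatrix ℝ).mulVecLin) = 1)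
    (x : V → ℝ) (hx : x ≠ 0) (hker : (G.adjMatrix ℝ).mulVec x = 0)
    (S : Finset V) (hS : S.Nonempty) (hsum : ∑ v ∈ S, x v = 0)
    (hdeg : ∀ v, S.card ≠ G.degree v) :
    AckProp G := by
  classical
  set A := G.adjMatrix ℝ with hA
  have hsymm : ∀ v j, A v j = A j v := fun v j => by
    simp [hA, SimpleGraph.adjMatrix_apply, SimpleGraph.adj_comm]
  -- the candidate vector
  set y : V → ℝ := fun v => if v ∈ S then 1 else 0 with hy
  -- the linear functional z ↦ ⟨z, x⟩
  let f : (V → ℝ) →ₗ[ℝ] ℝ :=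
    { toFun := fun z => ∑ v, z v * x v
      map_add' := by intro a b; simp [add_mul, Finset.sum_add_distrib]
      map_smul' := by intro c a; simp [smul_eq_mul, mul_assoc, Finset.mul_sum] }
  have hfx : f x ≠ 0 := by
    have : (0 : ℝ) < ∑ v, x v * x v := by
      obtain ⟨v, hv⟩ : ∃ v, x v ≠ 0 := by
        by_contra h; push_neg at h; exact hx (funext h)
      apply Finset.sum_pos' (fun i _ => mul_self_nonneg _)
      exact ⟨v, Finset.mem_univ v, mul_self_pos.mpr hv⟩
    simpa [f] using this.ne'
  have hrange : LinearMap.range f = ⊤ := by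
    rw [LinearMap.range_eq_top]
    intro r
    exact ⟨(r / f x) • x, by rw [map_smul, smul_eq_mul]; field_simp⟩
  have hsub : LinearMap.range A.mulVecLin ≤ LinearMap.ker f := by
    rintro z ⟨w, rfl⟩
    simp only [LinearMap.mem_ker, Matrix.mulVecLin_apply]
    show ∑ v, (A.mulVec w) v * x v = 0
    calc ∑ v, (A.mulVec w) v * x v
        = ∑ v, ∑ j, A v j * w j * x v := by
          simp [Matrix.mulVec, dotProduct, Finset.sum_mul]
      _ = ∑ j, (∑ v, A j v * x v) * w j := by
          rw [Finset.sum_comm]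
          refine Finset.sum_congr rfl fun j _ => ?_
          rw [Finset.sum_mul]
          refine Finset.sum_congr rfl fun v _ => ?_
          rw [hsymm v j]; ring
      _ = ∑ j, (A.mulVec x) j * w j := rfl
      _ = 0 := by
          refine Finset.sum_eq_zero fun j _ => ?_
          rw [show A.mulVec x j = 0 from congrFun hker j, zero_mul]
  have heq : LinearMap.range A.mulVecLin = LinearMap.ker f := by
    apply Submodule.eq_of_le_of_finrank_le hsub
    have h1 := LinearMap.finrank_range_add_finrank_ker A.mulVecLin
    have h2 := LinearMap.finrank_range_add_finrank_ker f
    rw [hrange] at h2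
    simp only [finrank_top] at h2
    have h3 : Module.finrank ℝ ℝ = 1 := Module.finrank_self ℝ
    omega
  refine ⟨y, ?_, ?_, ?_, ?_⟩
  · obtain ⟨v, hv⟩ := hS
    intro h
    have := congrFun h v
    simp [hy, hv] at this
  · intro v; by_cases h : v ∈ S <;> simp [hy, h]
  · have hmem : y ∈ LinearMap.ker f := by
      simp only [LinearMap.mem_ker]
      show ∑ v, y v * x v = 0
      rw [← hsum]
      simp [hy, ite_mul, Finset.sum_ite_mem]
    rw [← heq] at hmem
    obtain ⟨w, hw⟩ := hmem
    have hspan : Submodule.span ℝ (Set.range fun i => A i) =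
        LinearMap.range A.mulVecLin := by
      rw [Matrix.range_mulVecLin]
      congr 1
      congr 1
      funext i j
      exact hsymm i j
    rw [hspan]
    exact ⟨w, hw⟩
  · intro i hyi
    have hsum1 : ∑ v, y v = (S.card : ℝ) := by
      simp [hy]
    have hsum2 : ∑ v, A i v = (G.degree i : ℝ) := by
      simp [hA, SimpleGraph.adjMatrix_apply, SimpleGraph.degree,
        SimpleGraph.neighborFinset_eq_filter, Finset.sum_boole]
    have : (S.card : ℝ) = (G.degree i : ℝ) := by
      rw [← hsum1, ← hsum2]
      exact Finset.sum_congr rfl fun v _ => congrFun hyi v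
    exact hdeg i (Nat.cast_injective this)
end

section
/- For every integer k ≥ 3, the satellite graph S_{2k+1} is a nut graph: the kernel of its adjacency matrix over ℝ is one-dimensional, spanned by the vector taking value +1 on each u_i, value −1 on each w_i, and value −1 on d, and every nonzero kernel vector has all entries nonzero. -/
/-- Vertices of the satellite graph: the dominating vertex `d = Sum.inl ()`,
the cycle vertices `u i = Sum.inr (Sum.inl i)` and the pendant-type vertices
`w i = Sum.inr (Sum.inr i)`. -/
abbrev SatV (k : ℕ) := Unit ⊕ Fin k ⊕ Fin k

/-- Generating relation for the satellite graph `S_{2k+1}`: `d` is adjacent to every other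
vertex, `u_1, …, u_k` form a cycle, and `u_i` is adjacent to `w_i`. -/
def satRel (k : ℕ) : SatV k → SatV k → Prop
  | Sum.inl _, _ => True
  | Sum.inr (Sum.inl i), Sum.inr (Sum.inl j) => (j : ℕ) = ((i : ℕ) + 1) % k
  | Sum.inr (Sum.inl i), Sum.inr (Sum.inr j) => i = j
  | _, _ => False

/-- The satellite graph `S_{2k+1}` on `2k+1` vertices. -/
def satGraph (k : ℕ) : SimpleGraph (SatV k) := SimpleGraph.fromRel (satRel k)

noncomputable instance (k : ℕ) : DecidableRel (satGraph k).Adj := Classical.decRel _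


/-- The vector taking value `+1` on each `u_i`, `-1` on each `w_i` and `-1` on `d`. -/
def satKer (k : ℕ) : SatV k → ℝ
  | Sum.inl _ => -1
  | Sum.inr (Sum.inl _) => 1
  | Sum.inr (Sum.inr _) => -1

namespace SatAux

variable {k : ℕ}

def fsucc (hk : 3 ≤ k) (i : Fin k) : Fin k := ⟨((i : ℕ) + 1) % k, Nat.mod_lt _ (by omega)⟩
def fpred (hk : 3 ≤ k) (i : Fin k) : Fin k := ⟨((i : ℕ) + k - 1) % k, Nat.mod_lt _ (by omega)⟩

lemma succ_mod (hk : 3 ≤ k) (i : Fin k) :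
    ((i : ℕ) + 1) % k = if (i : ℕ) + 1 = k then 0 else (i : ℕ) + 1 := by
  split
  · rename_i h; rw [h, Nat.mod_self]
  · exact Nat.mod_eq_of_lt (by have := i.isLt; omega)

lemma pred_mod (hk : 3 ≤ k) (i : Fin k) :
    ((i : ℕ) + k - 1) % k = if (i : ℕ) = 0 then k - 1 else (i : ℕ) - 1 := by
  split
  · rename_i h; rw [h, Nat.zero_add]; exact Nat.mod_eq_of_lt (by omega)
  · rename_i h
    have : (i : ℕ) + k - 1 = ((i : ℕ) - 1) + k := by omega
    rw [this, Nat.add_mod_right]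
    exact Nat.mod_eq_of_lt (by have := i.isLt; omega)

lemma fsucc_val (hk : 3 ≤ k) (i : Fin k) :
    (fsucc hk i : ℕ) = if (i : ℕ) + 1 = k then 0 else (i : ℕ) + 1 := succ_mod hk i

lemma fpred_val (hk : 3 ≤ k) (i : Fin k) :
    (fpred hk i : ℕ) = if (i : ℕ) = 0 then k - 1 else (i : ℕ) - 1 := pred_mod hk i

lemma pred_iff (hk : 3 ≤ k) (i j : Fin k) :
    (i : ℕ) = ((j : ℕ) + 1) % k ↔ j = fpred hk i := by
  have hi := i.isLt; have hj := j.isLt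
  rw [Fin.ext_iff, fpred_val hk i, succ_mod hk j]
  split <;> split <;> omega

lemma succ_iff (hk : 3 ≤ k) (i j : Fin k) :
    (j : ℕ) = ((i : ℕ) + 1) % k ↔ j = fsucc hk i := by
  rw [Fin.ext_iff]; rfl

lemma fsucc_ne (hk : 3 ≤ k) (i : Fin k) : fsucc hk i ≠ i := by
  have hi := i.isLt
  rw [Ne, Fin.ext_iff, fsucc_val hk i]
  split <;> omega

lemma fpred_ne (hk : 3 ≤ k) (i : Fin k) : fpred hk i ≠ i := by
  have hi := i.isLt
  rw [Ne, Fin.ext_iff, fpred_val hk i]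
  split <;> omega

lemma fsucc_ne_fpred (hk : 3 ≤ k) (i : Fin k) : fsucc hk i ≠ fpred hk i := by
  have hi := i.isLt
  rw [Ne, Fin.ext_iff, fsucc_val hk i, fpred_val hk i]
  split <;> split <;> omega

lemma adj_uu (hk : 3 ≤ k) (i j : Fin k) :
    (satGraph k).Adj (Sum.inr (Sum.inl i)) (Sum.inr (Sum.inl j)) ↔
      j = fsucc hk i ∨ j = fpred hk i := by
  rw [satGraph, SimpleGraph.fromRel_adj]
  simp only [satRel, ne_eq, Sum.inr.injEq, Sum.inl.injEq]
  rw [succ_iff hk, pred_iff hk]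
  constructor
  · rintro ⟨_, h⟩; exact h
  · rintro (h | h)
    · exact ⟨by rintro rfl; exact fsucc_ne hk i h.symm, Or.inl h⟩
    · exact ⟨by rintro rfl; exact fpred_ne hk i h.symm, Or.inr h⟩

lemma sum_pair {a b : Fin k} (hab : a ≠ b) (f : Fin k → ℝ) :
    (∑ x : Fin k, if x = a ∨ x = b then f x else 0) = f a + f b := by
  have : ∀ x : Fin k, (if x = a ∨ x = b then f x else 0) =
      (if x = a then f x else 0) + (if x = b then f x else 0) := by
    intro x
    by_cases h1 : x = a <;> by_cases h2 : x = b <;> simp_all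
  rw [Finset.sum_congr rfl fun x _ => this x, Finset.sum_add_distrib,
    Finset.sum_ite_eq', Finset.sum_ite_eq']
  simp

-- Row computations
lemma row_w (hk : 3 ≤ k) (y : SatV k → ℝ) (i : Fin k) :
    ((satGraph k).adjMatrix ℝ).mulVec y (Sum.inr (Sum.inr i)) =
      y (Sum.inl ()) + y (Sum.inr (Sum.inl i)) := by
  simp only [Matrix.mulVec, dotProduct, SimpleGraph.adjMatrix_apply]
  rw [Fintype.sum_sum_type, Fintype.sum_sum_type]
  simp only [satGraph, SimpleGraph.fromRel_adj, satRel, ne_eq, Sum.inr.injEq, Sum.inl.injEq,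
    reduceCtorEq, or_false, false_or, not_false_eq_true, true_and, and_true, ite_mul, one_mul,
    zero_mul, if_false, if_true, Finset.sum_const_zero, add_zero]
  simp [Finset.sum_ite_eq]


lemma row_u (hk : 3 ≤ k) (y : SatV k → ℝ) (i : Fin k) :
    ((satGraph k).adjMatrix ℝ).mulVec y (Sum.inr (Sum.inl i)) =
      y (Sum.inl ()) + ((y (Sum.inr (Sum.inl (fsucc hk i))) + y (Sum.inr (Sum.inl (fpred hk i))))
        + y (Sum.inr (Sum.inr i))) := by
  simp only [Matrix.mulVec, dotProduct, SimpleGraph.adjMatrix_apply]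
  rw [Fintype.sum_sum_type, Fintype.sum_sum_type]
  simp only [adj_uu hk]
  simp only [satGraph, SimpleGraph.fromRel_adj, satRel, ne_eq, Sum.inr.injEq, Sum.inl.injEq,
    reduceCtorEq, or_false, false_or, not_false_eq_true, true_and, and_true, ite_mul, one_mul,
    zero_mul, if_false, if_true, Finset.sum_const_zero, add_zero]
  rw [sum_pair (fsucc_ne_fpred hk i)]
  simp [Finset.sum_ite_eq]

lemma row_d (hk : 3 ≤ k) (y : SatV k → ℝ) :
    ((satGraph k).adjMatrix ℝ).mulVec y (Sum.inl ()) =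
      (∑ j : Fin k, y (Sum.inr (Sum.inl j))) + ∑ j : Fin k, y (Sum.inr (Sum.inr j)) := by
  simp only [Matrix.mulVec, dotProduct, SimpleGraph.adjMatrix_apply]
  rw [Fintype.sum_sum_type, Fintype.sum_sum_type]
  simp [satGraph, SimpleGraph.fromRel_adj, satRel]

lemma satKer_mem (hk : 3 ≤ k) :
    ((satGraph k).adjMatrix ℝ).mulVec (satKer k) = 0 := by
  funext v
  match v with
  | Sum.inl () => rw [row_d hk]; simp [satKer]
  | Sum.inr (Sum.inl i) => rw [row_u hk]; simp [satKer]
  | Sum.inr (Sum.inr i) => rw [row_w hk]; simp [satKer]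

lemma ker_eq_smul (hk : 3 ≤ k) (y : SatV k → ℝ)
    (hy : ((satGraph k).adjMatrix ℝ).mulVec y = 0) :
    y = (-(y (Sum.inl ()))) • satKer k := by
  have hu : ∀ i : Fin k, y (Sum.inr (Sum.inl i)) = -(y (Sum.inl ())) := by
    intro i
    have := congrFun hy (Sum.inr (Sum.inr i))
    rw [row_w hk] at this
    simp only [Pi.zero_apply] at this
    linarith
  have hw : ∀ i : Fin k, y (Sum.inr (Sum.inr i)) = y (Sum.inl ()) := by
    intro i
    have := congrFun hy (Sum.inr (Sum.inl i))
    rw [row_u hk] at this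
    simp only [Pi.zero_apply] at this
    rw [hu (fsucc hk i), hu (fpred hk i)] at this
    linarith
  funext v
  match v with
  | Sum.inl () => simp [satKer]
  | Sum.inr (Sum.inl i) => simp [satKer, hu i]
  | Sum.inr (Sum.inr i) => simp [satKer, hw i]

lemma satKer_ne_zero : satKer k ≠ 0 := by
  intro h
  have := congrFun h (Sum.inl ())
  simp [satKer] at this

end SatAux

/-- For every `k ≥ 3` the satellite graph `S_{2k+1}` is a nut graph: the kernel of its
adjacency matrix over `ℝ` is one-dimensional, spanned by the vector which is `+1` on each
`u_i`, `-1` on each `w_i` and `-1` on `d`, and every nonzero kernel vector is full. -/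
theorem satGraph_isNut (k : ℕ) (hk : 3 ≤ k) :
    LinearMap.ker ((satGraph k).adjMatrix ℝ).mulVecLin = Submodule.span ℝ {satKer k} ∧
    Module.finrank ℝ ↥(LinearMap.ker ((satGraph k).adjMatrix ℝ).mulVecLin) = 1 ∧
    (∀ y : SatV k → ℝ, ((satGraph k).adjMatrix ℝ).mulVec y = 0 → y ≠ 0 → ∀ v, y v ≠ 0) := by
  have hker : LinearMap.ker ((satGraph k).adjMatrix ℝ).mulVecLin = Submodule.span ℝ {satKer k} := by
    apply le_antisymm
    · intro y hy
      rw [LinearMap.mem_ker, Matrix.mulVecLin_apply] at hy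
      rw [Submodule.mem_span_singleton]
      exact ⟨_, (SatAux.ker_eq_smul hk y hy).symm⟩
    · rw [Submodule.span_singleton_le_iff_mem, LinearMap.mem_ker, Matrix.mulVecLin_apply]
      exact SatAux.satKer_mem hk
  refine ⟨hker, ?_, ?_⟩
  · rw [hker]
    exact finrank_span_singleton SatAux.satKer_ne_zero
  · intro y hy hy0 v
    have hrep := SatAux.ker_eq_smul hk y hy
    have hc : y (Sum.inl ()) ≠ 0 := by
      intro h
      apply hy0
      rw [hrep, h]
      simp
    rw [hrep]
    match v with
    | Sum.inl () => simp [satKer, hc]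
    | Sum.inr (Sum.inl i) => simp [satKer, hc]
    | Sum.inr (Sum.inr i) => simp [satKer, hc]
end

section
/- For every integer k ≥ 3, the satellite graph S_{2k+1} satisfies the ACK property. -/
/-- For every `k ≥ 3`, the satellite graph `S_{2k+1}` satisfies the ACK property. -/
theorem satGraph_ackProp (k : ℕ) (hk : 3 ≤ k) : AckProp (satGraph k) := by
  have hk0 : 0 < k := by omega
  set G := satGraph k with hG
  set A : SatV k → SatV k → ℝ := fun i => (G.adjMatrix ℝ) i with hA
  set d : SatV k := Sum.inl () with hd
  set u : Fin k → SatV k := fun i => Sum.inr (Sum.inl i) with hu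
  set w : Fin k → SatV k := fun i => Sum.inr (Sum.inr i) with hw
  set i0 : Fin k := ⟨0, by omega⟩ with hi0
  set il : Fin k := ⟨k - 1, by omega⟩ with hil
  -- adjacency facts
  have adj_iff : ∀ a b : SatV k, G.Adj a b ↔ a ≠ b ∧ (satRel k a b ∨ satRel k b a) := by
    intro a b; exact SimpleGraph.fromRel_adj _ a b
  have adj_ud : ∀ i : Fin k, G.Adj (u i) d := by
    intro i
    rw [adj_iff]
    refine ⟨by simp [hu, hd], Or.inr ?_⟩
    simp [satRel, hu, hd]
  have adj_wd : ∀ i : Fin k, G.Adj (w i) d := by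
    intro i
    rw [adj_iff]
    refine ⟨by simp [hw, hd], Or.inr ?_⟩
    simp [satRel, hw, hd]
  have adj_uu : ∀ i j : Fin k, G.Adj (u i) (u j) ↔
      ((j : ℕ) = ((i : ℕ) + 1) % k ∨ (i : ℕ) = ((j : ℕ) + 1) % k) := by
    intro i j
    rw [adj_iff]
    simp only [satRel, hu, ne_eq, Sum.inr.injEq, Sum.inl.injEq]
    constructor
    · rintro ⟨-, h⟩; exact h
    · intro h
      refine ⟨?_, h⟩
      intro hij
      subst hij
      have hlt : (i : ℕ) < k := i.isLt
      rcases Nat.lt_or_ge ((i : ℕ) + 1) k with hc | hc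
      · rcases h with h | h <;> rw [Nat.mod_eq_of_lt hc] at h <;> omega
      · have hik : (i : ℕ) + 1 = k := by omega
        rcases h with h | h <;> rw [hik, Nat.mod_self] at h <;> omega
  have adj_uw : ∀ i j : Fin k, G.Adj (u i) (w j) ↔ i = j := by
    intro i j
    rw [adj_iff]
    simp [satRel, hu, hw]
  have adj_ww : ∀ i j : Fin k, ¬ G.Adj (w i) (w j) := by
    intro i j
    rw [adj_iff]
    simp [satRel, hw]
  have Aself : ∀ a : SatV k, A a a = 0 := by
    intro a; simp [hA]
  have Aapp : ∀ a b : SatV k, A a b = if G.Adj a b then 1 else 0 := by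
    intro a b; simp [hA]
  -- the witness vector
  set y : SatV k → ℝ := fun v =>
    match v with
    | Sum.inl _ => 1
    | Sum.inr (Sum.inl i) => if (i : ℕ) = 0 ∨ (i : ℕ) = 1 then 1 else 0
    | Sum.inr (Sum.inr i) => if (i : ℕ) = 0 then 1 else 0
    with hy
  have hmod0 : ((0 : ℕ) + 1) % k = 1 := by
    rw [Nat.mod_eq_of_lt (by omega)]
  have hy_eq : y = fun v => A (u i0) v + A (w i0) v - A (w il) v := by
    funext v
    rcases v with _ | v
    · -- v = d
      have h1 : A (u i0) (Sum.inl ()) = 1 := by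
        rw [Aapp, if_pos (adj_ud i0)]
      have h2 : A (w i0) (Sum.inl ()) = 1 := by
        rw [Aapp, if_pos (adj_wd i0)]
      have h3 : A (w il) (Sum.inl ()) = 1 := by
        rw [Aapp, if_pos (adj_wd il)]
      simp only [hy, h1, h2, h3]
      norm_num
    rcases v with j | j
    · -- v = u j
      have h1 : A (u i0) (Sum.inr (Sum.inl j)) =
          if (j : ℕ) = 1 ∨ (j : ℕ) = k - 1 then 1 else 0 := by
        rw [Aapp]
        have : G.Adj (u i0) (u j) ↔ ((j : ℕ) = 1 ∨ (j : ℕ) = k - 1) := by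
          rw [adj_uu]
          simp only [hi0, hmod0]
          constructor
          · rintro (h | h)
            · exact Or.inl h
            · right
              have hlt : (j : ℕ) < k := j.isLt
              rcases Nat.lt_or_ge ((j : ℕ) + 1) k with hc | hc
              · rw [Nat.mod_eq_of_lt hc] at h; omega
              · omega
          · rintro (h | h)
            · exact Or.inl h
            · right
              have : (j : ℕ) + 1 = k := by have := j.isLt; omega
              rw [this, Nat.mod_self]
        simp only [hu] at this
        rw [if_congr this rfl rfl]
      have h2 : A (w i0) (Sum.inr (Sum.inl j)) = if (j : ℕ) = 0 then 1 else 0 := by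
        rw [Aapp]
        have : G.Adj (w i0) (u j) ↔ (j : ℕ) = 0 := by
          rw [G.adj_comm, adj_uw, Fin.ext_iff, hi0]
        simp only [hw, hu] at this
        rw [if_congr this rfl rfl]
      have h3 : A (w il) (Sum.inr (Sum.inl j)) = if (j : ℕ) = k - 1 then 1 else 0 := by
        rw [Aapp]
        have : G.Adj (w il) (u j) ↔ (j : ℕ) = k - 1 := by
          rw [G.adj_comm, adj_uw, Fin.ext_iff, hil]
        simp only [hw, hu] at this
        rw [if_congr this rfl rfl]
      simp only [hy, h1, h2, h3]
      have hjlt : (j : ℕ) < k := j.isLt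
      split_ifs <;> first | omega | norm_num
    · -- v = w j
      have h1 : A (u i0) (Sum.inr (Sum.inr j)) = if (j : ℕ) = 0 then 1 else 0 := by
        rw [Aapp]
        have : G.Adj (u i0) (w j) ↔ (j : ℕ) = 0 := by
          rw [adj_uw, Fin.ext_iff, hi0]; exact eq_comm
        simp only [hu, hw] at this
        rw [if_congr this rfl rfl]
      have h2 : A (w i0) (Sum.inr (Sum.inr j)) = 0 := by
        rw [Aapp, if_neg]
        exact adj_ww i0 j
      have h3 : A (w il) (Sum.inr (Sum.inr j)) = 0 := by
        rw [Aapp, if_neg]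
        exact adj_ww il j
      simp only [hy, h1, h2, h3]
      ring
  refine ⟨y, ?_, ?_, ?_, ?_⟩
  · intro h
    have := congrFun h (Sum.inl ())
    simp [hy] at this
  · intro v
    rcases v with _ | v
    · right; rfl
    rcases v with j | j <;> simp only [hy] <;> split_ifs <;> simp
  · have h1 : A (u i0) ∈ Submodule.span ℝ (Set.range fun i => (G.adjMatrix ℝ) i) :=
      Submodule.subset_span ⟨u i0, rfl⟩
    have h2 : A (w i0) ∈ Submodule.span ℝ (Set.range fun i => (G.adjMatrix ℝ) i) :=
      Submodule.subset_span ⟨w i0, rfl⟩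
    have h3 : A (w il) ∈ Submodule.span ℝ (Set.range fun i => (G.adjMatrix ℝ) i) :=
      Submodule.subset_span ⟨w il, rfl⟩
    rw [hy_eq]
    exact Submodule.sub_mem _ (Submodule.add_mem _ h1 h2) h3
  · intro i h
    rcases i with ⟨⟩ | j | j
    · have := congrFun h (Sum.inl ())
      have h0 : SimpleGraph.adjMatrix ℝ (satGraph k) (Sum.inl ()) (Sum.inl ()) = 0 :=
        Aself (Sum.inl ())
      rw [h0] at this
      simp only [hy] at this
      norm_num at this
    · by_cases hj : (j : ℕ) = 0
      · have := congrFun h (Sum.inr (Sum.inl j))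
        have h0 : SimpleGraph.adjMatrix ℝ (satGraph k)
            (Sum.inr (Sum.inl j)) (Sum.inr (Sum.inl j)) = 0 := Aself _
        rw [h0] at this
        simp only [hy, hj] at this
        norm_num at this
      · have := congrFun h (Sum.inr (Sum.inr j))
        have h0 : SimpleGraph.adjMatrix ℝ (satGraph k)
            (Sum.inr (Sum.inl j)) (Sum.inr (Sum.inr j)) = 1 := by
          have : A (Sum.inr (Sum.inl j)) (Sum.inr (Sum.inr j)) = 1 := by
            rw [Aapp, if_pos ((adj_uw j j).mpr rfl)]
          exact this
        rw [h0] at this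
        simp only [hy] at this
        rw [if_neg hj] at this
        norm_num at this
    · have := congrFun h (Sum.inr (Sum.inr i0))
      have h0 : SimpleGraph.adjMatrix ℝ (satGraph k)
          (Sum.inr (Sum.inr j)) (Sum.inr (Sum.inr i0)) = 0 := by
        have : A (Sum.inr (Sum.inr j)) (Sum.inr (Sum.inr i0)) = 0 := by
          rw [Aapp, if_neg (adj_ww j i0)]
        exact this
      rw [h0] at this
      simp only [hy, hi0] at this
      norm_num at this
end

section
/- The graph E_10 satisfies the ACK property. -/
/-- The list of edges of the graph `E₁₀` (vertices labelled `1, …, 10`). -/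
def e10Edges : List (ℕ × ℕ) :=
  [(1,2),(1,3),(1,4),(1,5),(1,6),(1,7),(1,8),(1,9),(1,10),
   (2,3),(3,4),(4,5),(5,6),(6,7),(7,8),(8,2),
   (4,9),(6,10),
   (4,6),(5,7),(3,8),(2,6)]

/-- The graph `E₁₀` on ten vertices (vertex `i : Fin 10` represents the label `i+1`). -/
def E10 : SimpleGraph (Fin 10) :=
  SimpleGraph.fromRel fun i j => ((i : ℕ) + 1, (j : ℕ) + 1) ∈ e10Edges

noncomputable instance : DecidableRel E10.Adj := Classical.decRel _

lemma adj_one (i j : Fin 10) (h : E10.Adj i j) : E10.adjMatrix ℝ i j = 1 := by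
  simp [SimpleGraph.adjMatrix_apply, h]

lemma adj_zero (i j : Fin 10) (h : ¬ E10.Adj i j) : E10.adjMatrix ℝ i j = 0 := by
  simp [SimpleGraph.adjMatrix_apply, h]

lemma row6 : (E10.adjMatrix ℝ) 6 = ![1,0,0,0,1,1,0,1,0,0] := by
  funext j
  fin_cases j <;>
    first
    | exact adj_one _ _ (by rw [E10, SimpleGraph.fromRel_adj]; decide)
    | exact adj_zero _ _ (by rw [E10, SimpleGraph.fromRel_adj]; decide)

lemma row9 : (E10.adjMatrix ℝ) 9 = ![1,0,0,0,0,1,0,0,0,0] := by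
  funext j
  fin_cases j <;>
    first
    | exact adj_one _ _ (by rw [E10, SimpleGraph.fromRel_adj]; decide)
    | exact adj_zero _ _ (by rw [E10, SimpleGraph.fromRel_adj]; decide)

/-- The graph `E10` satisfies the ACK property. -/
theorem E10_ackProp : AckProp E10 := by
  refine ⟨![0,0,0,0,1,0,0,1,0,0], ?_, ?_, ?_, ?_⟩
  · intro h
    have := congrFun h 4
    change (1:ℝ) = 0 at this
    norm_num at this
  · intro v
    fin_cases v <;> norm_num
  · have hy : (![0,0,0,0,1,0,0,1,0,0] : Fin 10 → ℝ)
        = (E10.adjMatrix ℝ) 6 - (E10.adjMatrix ℝ) 9 := by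
      rw [row6, row9]
      funext j
      fin_cases j <;> norm_num
    rw [hy]
    exact Submodule.sub_mem _ (Submodule.subset_span ⟨6, rfl⟩)
      (Submodule.subset_span ⟨9, rfl⟩)
  · intro i h
    fin_cases i <;>
      first
      | (have := congrFun h 0
         rw [adj_one _ _ (by rw [E10, SimpleGraph.fromRel_adj]; decide)] at this
         norm_num at this)
      | (have := congrFun h 1
         rw [adj_one _ _ (by rw [E10, SimpleGraph.fromRel_adj]; decide)] at this
         norm_num at this)
end

section
/- Let H be a finite simple graph such that 1 is a simple eigenvalue of its adjacency matrix A_H (the eigenspace for eigenvalue 1 is one-dimensional) and −1 is not an eigenvalue of A_H. Then the Cartesian product G = K_2 □ H satisfies the ACK property. -/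
open SimpleGraph

noncomputable instance {α β : Type} (G : SimpleGraph α) (H : SimpleGraph β) :
    DecidableRel (G □ H).Adj := Classical.decRel _

/-- If `1` is a simple eigenvalue of `A_H` (its eigenspace is one-dimensional) and `-1` is
not an eigenvalue of `A_H`, then `K₂ □ H` satisfies the ACK property. -/
theorem ackProp_boxProd_K2 {V : Type} [Fintype V] [DecidableEq V]
    (H : SimpleGraph V) [DecidableRel H.Adj]
    (h1 : Module.finrank ℝ ↥(LinearMap.ker (H.adjMatrix ℝ - 1).mulVecLin) = 1)
    (h2 : ∀ x : V → ℝ, (H.adjMatrix ℝ).mulVec x = -x → x = 0) :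
    AckProp ((⊤ : SimpleGraph (Fin 2)) □ H) := by
  classical
  have hne : Nonempty V := by
    by_contra h
    rw [not_nonempty_iff] at h
    have hsub : Subsingleton (V → ℝ) := ⟨fun a b => funext fun v => (h.elim v)⟩
    have h0 : Module.finrank ℝ ↥(LinearMap.ker (H.adjMatrix ℝ - 1).mulVecLin) = 0 :=
      Module.finrank_zero_of_subsingleton
    omega
  have hinj : Function.Injective (H.adjMatrix ℝ + 1).mulVecLin := by
    rw [← LinearMap.ker_eq_bot, LinearMap.ker_eq_bot']
    intro x hx
    apply h2
    have hx' : (H.adjMatrix ℝ + 1).mulVec x = 0 := hx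
    rw [Matrix.add_mulVec, Matrix.one_mulVec] at hx'
    exact eq_neg_of_add_eq_zero_left hx'
  have hsurj : Function.Surjective (H.adjMatrix ℝ + 1).mulVecLin :=
    (LinearMap.injective_iff_surjective).mp hinj
  obtain ⟨z, hz⟩ := hsurj (fun _ => 1)
  have hzz : ∀ v, (H.adjMatrix ℝ).mulVec z v + z v = 1 := by
    intro v
    have h := congrFun hz v
    rw [Matrix.mulVecLin_apply, Matrix.add_mulVec, Matrix.one_mulVec] at h
    simp only [Pi.add_apply] at h
    exact h
  set A := ((⊤ : SimpleGraph (Fin 2)) □ H).adjMatrix ℝ with hA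
  set x : Fin 2 × V → ℝ := fun q => z q.2 with hxdef
  have key : A.mulVec x = fun _ => 1 := by
    funext p
    obtain ⟨i, v⟩ := p
    have expand : A.mulVec x (i, v) = ∑ j : Fin 2, ∑ w : V, A (i, v) (j, w) * z w := by
      rw [Matrix.mulVec, dotProduct, Fintype.sum_prod_type]
    rw [expand]
    rw [Fin.sum_univ_two]
    have eH : ∀ (i : Fin 2) (v : V), ∑ w : V, A (i, v) (i, w) * z w
        = (H.adjMatrix ℝ).mulVec z v := by
      intro i v
      rw [Matrix.mulVec, dotProduct]
      congr 1
      funext w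
      congr 1
      simp [hA, SimpleGraph.adjMatrix_apply, SimpleGraph.boxProd_adj]
    have eI : ∀ (i j : Fin 2) (v : V), i ≠ j → ∑ w : V, A (i, v) (j, w) * z w = z v := by
      intro i j v hij
      have : ∀ w : V, A (i, v) (j, w) * z w = (if v = w then z w else 0) := by
        intro w
        simp [hA, SimpleGraph.adjMatrix_apply, SimpleGraph.boxProd_adj, hij, hij.symm,
          ite_mul]
      simp_rw [this]
      simp
    fin_cases i
    · show ∑ w : V, A (0, v) (0, w) * z w + ∑ w : V, A (0, v) (1, w) * z w = 1
      rw [eH 0 v, eI 0 1 v (by decide)]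
      exact hzz v
    · show ∑ w : V, A (1, v) (0, w) * z w + ∑ w : V, A (1, v) (1, w) * z w = 1
      rw [eI 1 0 v (by decide), eH 1 v]
      rw [add_comm]
      exact hzz v
  refine ⟨fun _ => 1, ?_, fun v => Or.inr rfl, ?_, ?_⟩
  · intro h0
    obtain ⟨v⟩ := hne
    have := congrFun h0 (0, v)
    simpa using this
  · have hsym : A.mulVec x = Matrix.vecMul x A := by
      rw [← Matrix.mulVec_transpose, hA, SimpleGraph.transpose_adjMatrix]
    have hsum : Matrix.vecMul x A = ∑ i, x i • A i := by
      funext j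
      simp [Matrix.vecMul, dotProduct, Finset.sum_apply]
    rw [← key, hsym, hsum]
    exact Submodule.sum_mem _ fun i _ =>
      Submodule.smul_mem _ _ (Submodule.subset_span ⟨i, rfl⟩)
  · intro i hcontra
    have := congrFun hcontra i
    simp [hA, SimpleGraph.adjMatrix_apply] at this
end

section
/- Let H be a finite simple graph such that 1 is a simple eigenvalue of its adjacency matrix A_H, there is an eigenvector v for eigenvalue 1 all of whose entries are nonzero, and −1 is not an eigenvalue of A_H. Then the Cartesian product K_2 □ H is a nut graph; in particular the vector y = (v, −v) spans the kernel of the adjacency matrix of K_2 □ H. -/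
open SimpleGraph

lemma boxProd_K2_mulVec_apply {V : Type} [Fintype V] [DecidableEq V] (H : SimpleGraph V)
    [DecidableRel H.Adj] (z : Fin 2 × V → ℝ) (i : Fin 2) (u : V) :
    (((⊤ : SimpleGraph (Fin 2)) □ H).adjMatrix ℝ).mulVec z (i, u) =
      (H.adjMatrix ℝ).mulVec (fun w => z (i, w)) u + z (i + 1, u) := by
  simp only [Matrix.mulVec, dotProduct, Fintype.sum_prod_type,
    SimpleGraph.adjMatrix_apply, SimpleGraph.boxProd_adj, SimpleGraph.top_adj,
    Fin.sum_univ_two]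
  fin_cases i <;> simp [Finset.sum_ite_eq, eq_comm, add_comm]

/-- If `1` is a simple eigenvalue of `A_H` with a full eigenvector `v`, and `-1` is not an
eigenvalue of `A_H`, then `K₂ □ H` is a nut graph and `y = (v, -v)` spans the kernel of
its adjacency matrix. -/
theorem boxProd_K2_isNut {V : Type} [Fintype V] [DecidableEq V]
    (H : SimpleGraph V) [DecidableRel H.Adj]
    (h1 : Module.finrank ℝ ↥(LinearMap.ker (H.adjMatrix ℝ - 1).mulVecLin) = 1)
    (v : V → ℝ) (hv0 : v ≠ 0) (hv : (H.adjMatrix ℝ).mulVec v = v) (hvfull : ∀ u, v u ≠ 0)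
    (h2 : ∀ x : V → ℝ, (H.adjMatrix ℝ).mulVec x = -x → x = 0) :
    LinearMap.ker ((((⊤ : SimpleGraph (Fin 2)) □ H).adjMatrix ℝ)).mulVecLin =
      Submodule.span ℝ {fun p : Fin 2 × V => if p.1 = 0 then v p.2 else -v p.2} ∧
    Module.finrank ℝ
      ↥(LinearMap.ker (((⊤ : SimpleGraph (Fin 2)) □ H).adjMatrix ℝ).mulVecLin) = 1 ∧
    (∀ z : Fin 2 × V → ℝ, (((⊤ : SimpleGraph (Fin 2)) □ H).adjMatrix ℝ).mulVec z = 0 →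
      z ≠ 0 → ∀ p, z p ≠ 0) := by
  set A := H.adjMatrix ℝ with hA
  set y : Fin 2 × V → ℝ := fun p => if p.1 = 0 then v p.2 else -v p.2 with hy
  -- y is in the kernel
  have hyker : (((⊤ : SimpleGraph (Fin 2)) □ H).adjMatrix ℝ).mulVec y = 0 := by
    funext p
    obtain ⟨i, u⟩ := p
    rw [boxProd_K2_mulVec_apply]
    have hv' : ∀ u, A.mulVec v u = v u := fun u => congrFun hv u
    fin_cases i
    · have h0 : (fun w => y (0, w)) = v := by funext w; simp [hy]
      show A.mulVec (fun w => y (0, w)) u + y (0 + 1, u) = 0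
      rw [h0, hv']
      simp [hy]
    · have h1' : (fun w => y (1, w)) = -v := by funext w; simp [hy]
      show A.mulVec (fun w => y (1, w)) u + y (1 + 1, u) = 0
      rw [h1', Matrix.mulVec_neg, hv]
      simp [hy]
  -- the eigenspace for 1 is spanned by v
  have hvK : v ∈ LinearMap.ker (A - 1).mulVecLin := by
    simp [LinearMap.mem_ker, Matrix.mulVecLin_apply, Matrix.sub_mulVec, Matrix.one_mulVec, hv]
  have hspanv : Submodule.span ℝ {v} = LinearMap.ker (A - 1).mulVecLin := by
    apply Submodule.eq_of_le_of_finrank_eq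
    · rw [Submodule.span_le, Set.singleton_subset_iff]; exact hvK
    · rw [finrank_span_singleton hv0, h1]
  -- every kernel vector is a multiple of y
  have hker : ∀ z : Fin 2 × V → ℝ,
      (((⊤ : SimpleGraph (Fin 2)) □ H).adjMatrix ℝ).mulVec z = 0 → ∃ c : ℝ, z = c • y := by
    intro z hz
    set a : V → ℝ := fun u => z (0, u) with ha
    set b : V → ℝ := fun u => z (1, u) with hb
    have e0 : ∀ u, A.mulVec a u + b u = 0 := by
      intro u
      have := congrFun hz (0, u)
      rw [boxProd_K2_mulVec_apply] at this
      exact this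
    have e1 : ∀ u, A.mulVec b u + a u = 0 := by
      intro u
      have := congrFun hz (1, u)
      rw [boxProd_K2_mulVec_apply] at this
      exact this
    have hab : a + b = 0 := by
      apply h2
      funext u
      have h0 := e0 u
      have h1 := e1 u
      simp only [Matrix.mulVec_add, Pi.add_apply, Pi.neg_apply]
      linarith
    have hba : ∀ u, b u = -a u := by
      intro u
      have := congrFun hab u
      simp only [Pi.add_apply, Pi.zero_apply] at this
      linarith
    have haeig : A.mulVec a = a := by
      funext u
      have := e0 u
      rw [hba u] at this
      linarith
    have haK : a ∈ LinearMap.ker (A - 1).mulVecLin := by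
      simp [LinearMap.mem_ker, Matrix.mulVecLin_apply, Matrix.sub_mulVec, Matrix.one_mulVec,
        haeig]
    rw [← hspanv, Submodule.mem_span_singleton] at haK
    obtain ⟨c, hc⟩ := haK
    refine ⟨c, ?_⟩
    funext p
    obtain ⟨i, u⟩ := p
    have hau : a u = c * v u := by rw [← hc]; simp
    fin_cases i
    · simpa [hy, ha] using hau
    · have : b u = c * (-v u) := by rw [hba u, hau]; ring
      simpa [hy, hb] using this
  have hy0 : y ≠ 0 := by
    obtain ⟨u, hu⟩ := Function.ne_iff.mp hv0
    intro h
    have := congrFun h (0, u)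
    simp [hy] at this
    exact hvfull u this
  have hkereq : LinearMap.ker ((((⊤ : SimpleGraph (Fin 2)) □ H).adjMatrix ℝ)).mulVecLin =
      Submodule.span ℝ {y} := by
    apply le_antisymm
    · intro z hz
      rw [LinearMap.mem_ker, Matrix.mulVecLin_apply] at hz
      obtain ⟨c, hc⟩ := hker z hz
      rw [hc]
      exact Submodule.smul_mem _ c (Submodule.mem_span_singleton_self y)
    · rw [Submodule.span_le, Set.singleton_subset_iff]
      rw [SetLike.mem_coe, LinearMap.mem_ker, Matrix.mulVecLin_apply]
      exact hyker
  refine ⟨hkereq, ?_, ?_⟩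
  · rw [hkereq, finrank_span_singleton hy0]
  · intro z hz hz0 p
    obtain ⟨c, hc⟩ := hker z hz
    have hc0 : c ≠ 0 := by
      rintro rfl
      apply hz0
      rw [hc, zero_smul]
    obtain ⟨i, u⟩ := p
    rw [hc]
    fin_cases i
    · simpa [hy] using mul_ne_zero hc0 (hvfull u)
    · simpa [hy] using mul_ne_zero hc0 (neg_ne_zero.mpr (hvfull u))
end
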